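/- Let {μ_n} be Borel probability measures on ℝ². Suppose that for every ε > 0 there exists m > 0 such that |(iy)(iv) G_{μ_n}(iy, iv) − 1| < ε for all y, v ≥ m and all n ≥ 1. Then the sequence {μ_n} is tight. -/

import Mathlib

open MeasureTheory Complex

lemma re_calc (m s t : ℝ) (hm : 0 < m) :
    ((I * (m:ℂ)) * (I * (m:ℂ)) * ((I * (m:ℂ) - (s:ℂ)) * (I * (m:ℂ) - (t:ℂ)))⁻¹).re
      = (m^4 - m^2*s*t) / ((m^2+s^2)*(m^2+t^2)) := by
  have hD2 : ((m^2+s^2)*(m^2+t^2)) ≠ 0 := by positivity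
  have hD4 : (m ^ 2 * s ^ 2 + m ^ 2 * t ^ 2 + m ^ 4 + s ^ 2 * t ^ 2) ≠ 0 := by positivity
  simp only [Complex.mul_re, Complex.mul_im, Complex.inv_re, Complex.inv_im,
    Complex.normSq_apply, Complex.sub_re, Complex.sub_im, Complex.I_re, Complex.I_im,
    Complex.ofReal_re, Complex.ofReal_im, zero_mul, one_mul, mul_zero, mul_one,
    sub_zero, zero_sub, zero_add, add_zero, neg_mul, mul_neg, neg_neg, neg_sub]
  have hD3 : (s * t - m * m) * (s * t - m * m) + (s * m + m * t) * (s * m + m * t) ≠ 0 := by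
    have e : (s * t - m * m) * (s * t - m * m) + (s * m + m * t) * (s * m + m * t)
        = (m^2+s^2)*(m^2+t^2) := by ring
    rw [e]; positivity
  rw [eq_div_iff hD2]
  field_simp [hD3]
  linear_combination (m ^ 2 - s * t) * mul_inv_cancel₀ hD4

lemma frac_le_one (m s t : ℝ) (hm : 0 < m) :
    (m^4 - m^2*s*t) / ((m^2+s^2)*(m^2+t^2)) ≤ 1 := by
  rw [div_le_one (by positivity)]
  nlinarith [mul_nonneg (sq_nonneg m) (sq_nonneg (s+t)), sq_nonneg (s*t),
    mul_nonneg (sq_nonneg m) (sq_nonneg s), mul_nonneg (sq_nonneg m) (sq_nonneg t)]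

lemma frac_le_bad (m s t : ℝ) (hm : 0 < m) (hst : m^2 ≤ s^2 ∨ m^2 ≤ t^2) :
    (m^4 - m^2*s*t) / ((m^2+s^2)*(m^2+t^2)) ≤ 3/4 := by
  rw [div_le_iff₀ (by positivity)]
  have hm2 : 0 < m^2 := by positivity
  rcases hst with hs | ht
  · nlinarith [sq_nonneg (3*(s^2+m^2)*t + 2*m^2*s), mul_nonneg (sq_nonneg m) (sub_nonneg.mpr hs),
      mul_nonneg (mul_nonneg hm2.le hm2.le) (sub_nonneg.mpr hs), sq_nonneg (s^2 - m^2),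
      mul_nonneg (sub_nonneg.mpr hs) (sub_nonneg.mpr hs)]
  · nlinarith [sq_nonneg (3*(t^2+m^2)*s + 2*m^2*t), mul_nonneg (sq_nonneg m) (sub_nonneg.mpr ht),
      mul_nonneg (mul_nonneg hm2.le hm2.le) (sub_nonneg.mpr ht), sq_nonneg (t^2 - m^2),
      mul_nonneg (sub_nonneg.mpr ht) (sub_nonneg.mpr ht)]

theorem tightness_from_uniform_cauchy (μs : ℕ → Measure (ℝ × ℝ))
    (hμs : ∀ n, IsProbabilityMeasure (μs n))
    (h : ∀ ε : ℝ, 0 < ε → ∃ m : ℝ, 0 < m ∧ ∀ y v : ℝ, m ≤ y → m ≤ v → ∀ n : ℕ,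
      ‖(I * (y : ℂ)) * (I * (v : ℂ)) *
          (∫ p : ℝ × ℝ, ((I * (y : ℂ) - (p.1 : ℂ)) * (I * (v : ℂ) - (p.2 : ℂ)))⁻¹ ∂(μs n)) - 1‖ < ε) :
    ∀ ε : ℝ, 0 < ε → ∃ m : ℝ, 0 < m ∧ ∀ n : ℕ,
      μs n {p : ℝ × ℝ | ¬(|p.1| ≤ m ∧ |p.2| ≤ m)} < ENNReal.ofReal ε := by
  intro ε hε
  obtain ⟨m, hm, hbound⟩ := h (ε/4) (by linarith)
  refine ⟨m, hm, fun n => ?_⟩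
  haveI := hμs n
  set μ := μs n with hμ
  set f : ℝ × ℝ → ℂ := fun p => ((I * (m:ℂ) - (p.1:ℂ)) * (I * (m:ℂ) - (p.2:ℂ)))⁻¹ with hfdef
  have hne : ∀ x : ℝ, I * (m:ℂ) - (x:ℂ) ≠ 0 := by
    intro x hx
    have him := congrArg Complex.im hx
    simp [Complex.sub_im, Complex.mul_im] at him
    exact absurd him (ne_of_gt hm)
  have hcont : Continuous f := by
    apply Continuous.inv₀
    · fun_prop
    · intro p; exact mul_ne_zero (hne p.1) (hne p.2)
  have hnorm : ∀ p : ℝ × ℝ, ‖f p‖ ≤ (m*m)⁻¹ := by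
    intro p
    have h1 : ∀ x : ℝ, m ≤ ‖I * (m:ℂ) - (x:ℂ)‖ := by
      intro x
      have := Complex.abs_im_le_norm (I * (m:ℂ) - (x:ℂ))
      simp [Complex.sub_im, Complex.mul_im] at this
      calc m = |m| := (abs_of_pos hm).symm
        _ ≤ ‖I * (m:ℂ) - (x:ℂ)‖ := this
        _ = ‖I * (m:ℂ) - (x:ℂ)‖ := rfl
    have hmm : 0 < m*m := mul_pos hm hm
    rw [hfdef]
    simp only [norm_inv, norm_mul]
    apply inv_anti₀ hmm
    exact mul_le_mul (h1 p.1) (h1 p.2) hm.le ((hm.le.trans (h1 p.1)).trans (le_refl _))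
  have hfint : Integrable f μ := by
    refine (integrable_const ((m*m)⁻¹ : ℝ)).mono' hcont.aestronglyMeasurable ?_
    filter_upwards with p using hnorm p
  set c : ℂ := (I * (m:ℂ)) * (I * (m:ℂ)) with hcdef
  have hcint : Integrable (fun p => c * f p) μ := hfint.const_mul c
  have hreint : Integrable (fun p => (c * f p).re) μ := hcint.re
  set g : ℝ × ℝ → ℝ := fun p => 1 - (c * f p).re with hgdef
  have hgint : Integrable g μ := (integrable_const 1).sub hreint
  set B : Set (ℝ × ℝ) := {p : ℝ × ℝ | ¬(|p.1| ≤ m ∧ |p.2| ≤ m)} with hBdef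
  have hBmeas : MeasurableSet B := by
    have hclosed : IsClosed {p : ℝ × ℝ | |p.1| ≤ m ∧ |p.2| ≤ m} :=
      (isClosed_le (_root_.continuous_abs.comp continuous_fst) continuous_const).inter
        (isClosed_le (_root_.continuous_abs.comp continuous_snd) continuous_const)
    have : B = {p : ℝ × ℝ | |p.1| ≤ m ∧ |p.2| ≤ m}ᶜ := by
      rw [hBdef]; ext p; simp [Set.mem_compl_iff]
    rw [this]
    exact hclosed.measurableSet.compl
  have hre : ∀ p : ℝ × ℝ, (c * f p).re
      = (m^4 - m^2*p.1*p.2) / ((m^2+p.1^2)*(m^2+p.2^2)) := fun p => re_calc m p.1 p.2 hm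
  have hind : ∀ p : ℝ × ℝ, B.indicator (fun _ => (1:ℝ)/4) p ≤ g p := by
    intro p
    by_cases hp : p ∈ B
    · rw [Set.indicator_of_mem hp, hgdef]
      have hp' : m^2 ≤ p.1^2 ∨ m^2 ≤ p.2^2 := by
        rw [hBdef] at hp
        simp only [Set.mem_setOf_eq, not_and_or, not_le] at hp
        rcases hp with h1 | h1
        · left; nlinarith [_root_.sq_abs p.1, abs_nonneg p.1]
        · right; nlinarith [_root_.sq_abs p.2, abs_nonneg p.2]
      have := frac_le_bad m p.1 p.2 hm hp'
      simp only [hre p]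
      linarith
    · rw [Set.indicator_of_notMem hp, hgdef]
      have := frac_le_one m p.1 p.2 hm
      simp only [hre p]
      linarith
  have hindint : Integrable (B.indicator (fun _ => (1:ℝ)/4)) μ :=
    (integrable_const ((1:ℝ)/4)).indicator hBmeas
  have hmono : (μ B).toReal * (1/4) ≤ ∫ p, g p ∂μ := by
    have := integral_mono hindint hgint hind
    rwa [integral_indicator_const _ hBmeas, smul_eq_mul] at this
  have hcalc : ∫ p, g p ∂μ = 1 - (c * ∫ p, f p ∂μ).re := by
    rw [hgdef]
    have hcomm : ∫ p, (c * f p).re ∂μ = (∫ p, (c * f p) ∂μ).re := by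
      have := Complex.reCLM.integral_comp_comm hcint
      simpa using this
    rw [integral_sub (integrable_const 1) hreint, integral_const, probReal_univ,
      one_smul, hcomm, integral_const_mul]
  have hkey : ∫ p, g p ∂μ < ε/4 := by
    rw [hcalc]
    have hb := hbound m m le_rfl le_rfl n
    have : 1 - (c * ∫ p, f p ∂μ).re ≤ ‖c * (∫ p, f p ∂μ) - 1‖ := by
      have h1 : (1 - c * ∫ p, f p ∂μ).re ≤ ‖1 - c * ∫ p, f p ∂μ‖ :=
        Complex.re_le_norm _
      have h2 : ‖1 - c * ∫ p, f p ∂μ‖ = ‖c * (∫ p, f p ∂μ) - 1‖ := by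
        rw [← norm_neg]; congr 1; ring
      simp only [Complex.sub_re, Complex.one_re] at h1
      linarith [h1, h2.le, h2.ge]
    exact lt_of_le_of_lt this hb
  have htoReal : (μ B).toReal < ε := by linarith
  have hfin : μ B ≠ ⊤ := measure_ne_top μ B
  calc μ B = ENNReal.ofReal ((μ B).toReal) := (ENNReal.ofReal_toReal hfin).symm
    _ < ENNReal.ofReal ε := (ENNReal.ofReal_lt_ofReal_iff hε).mpr
        (lt_of_le_of_lt (le_refl _) htoReal)
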